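/- Let (S, (A_i)_{i=1}^m, H, P, (R_i)_{i=1}^m) be a tabular episodic Markov game satisfying Condition 2 with target policy π† and gap η > 0. Under the η-gap attack, for every agent i, every Markov product policy π, and every initial state s₁: Ṽ^{π†_i × π_{-i}}_{i,1}(s₁) − Ṽ^{π}_{i,1}(s₁) ≥ η · E[ ∑_{h=1}^H 1(a_{i,h} ≠ π†_{i,h}(s_h)) ] ≥ 0, where the expectation is over trajectories generated under π with transitions P started at s₁. -/

import Mathlib

open Finset

namespace MGAttack

variable {S : Type} [Fintype S] [DecidableEq S]
variable {m : ℕ} {A : Fin m → Type} [∀ i, Fintype (A i)] [∀ i, DecidableEq (A i)]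

/-- `VA P f π n h s`: expected sum of `f` over `n` steps starting from step `h` in
state `s`, when joint actions are drawn from the joint pmf `π` and states evolve
according to `P`.  With `f` a mean-reward function this is the value function. -/
noncomputable def VA (P : ℕ → S → (∀ i, A i) → S → ℝ) (f : ℕ → S → (∀ i, A i) → ℝ)
    (π : ℕ → S → (∀ i, A i) → ℝ) : ℕ → ℕ → S → ℝ
  | 0, _, _ => 0
  | n + 1, h, s => ∑ a, π h s a * (f h s a + ∑ s', P h s a s' * VA P f π n (h + 1) s')

/-- Value function `V^π_h(s)` for horizon `H` (steps `h, h+1, …, H`). -/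
noncomputable def Vf (P : ℕ → S → (∀ i, A i) → S → ℝ) (R : ℕ → S → (∀ i, A i) → ℝ)
    (π : ℕ → S → (∀ i, A i) → ℝ) (H h : ℕ) (s : S) : ℝ :=
  VA P R π (H + 1 - h) h s

/-- Q-function `Q^π_h(s,a)` for horizon `H`. -/
noncomputable def Qf (P : ℕ → S → (∀ i, A i) → S → ℝ) (R : ℕ → S → (∀ i, A i) → ℝ)
    (π : ℕ → S → (∀ i, A i) → ℝ) (H h : ℕ) (s : S) (a : ∀ i, A i) : ℝ :=
  R h s a + ∑ s', P h s a s' * VA P R π (H - h) (h + 1) s'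

/-- Joint pmf of a Markov product policy. -/
noncomputable def jp (π : ∀ i : Fin m, ℕ → S → A i → ℝ) : ℕ → S → (∀ i, A i) → ℝ :=
  fun h s a => ∏ i, π i h s (a i)

/-- Joint action prescribed by a deterministic (product) policy. -/
def tgtJ (τ : ∀ i : Fin m, ℕ → S → A i) (h : ℕ) (s : S) : ∀ i, A i := fun i => τ i h s

/-- A deterministic policy viewed as a (point-mass) stochastic policy. -/
noncomputable def detP (τ : ∀ i : Fin m, ℕ → S → A i) : ∀ i : Fin m, ℕ → S → A i → ℝ :=
  fun i h s b => if b = τ i h s then 1 else 0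

/-- `P` is a transition kernel for the steps `1, …, H`. -/
def IsKernel (H : ℕ) (P : ℕ → S → (∀ i, A i) → S → ℝ) : Prop :=
  ∀ h ∈ Finset.Icc 1 H, ∀ s a, (∀ s', 0 ≤ P h s a s') ∧ ∑ s', P h s a s' = 1

/-- `π` is a Markov product policy for the steps `1, …, H`. -/
def IsPolicy (H : ℕ) (π : ∀ i : Fin m, ℕ → S → A i → ℝ) : Prop :=
  ∀ i : Fin m, ∀ h ∈ Finset.Icc 1 H, ∀ s, (∀ b, 0 ≤ π i h s b) ∧ ∑ b, π i h s b = 1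

/-- `πi` is a Markov policy for the single agent `i`. -/
def IsPolicyI (H : ℕ) {i : Fin m} (πi : ℕ → S → A i → ℝ) : Prop :=
  ∀ h ∈ Finset.Icc 1 H, ∀ s, (∀ b, 0 ≤ πi h s b) ∧ ∑ b, πi h s b = 1

/-- The mean rewards all lie in `[0,1]`. -/
def IsReward (H : ℕ) (R : Fin m → ℕ → S → (∀ i, A i) → ℝ) : Prop :=
  ∀ i, ∀ h ∈ Finset.Icc 1 H, ∀ s a, R i h s a ∈ Set.Icc (0 : ℝ) 1

/-- `d_h(s,a) = m/2 + (1/2) ∑_i 1(a_i = π†_{i,h}(s))` of the `d`-portion attack. -/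
noncomputable def dfun (τ : ∀ i : Fin m, ℕ → S → A i) (h : ℕ) (s : S) (a : ∀ i, A i) : ℝ :=
  (m : ℝ) / 2 + (∑ i, if a i = τ i h s then (1 : ℝ) else 0) / 2

/-- Post-attack mean rewards of the `d`-portion attack (target `τ`, worse policy `τ'`). -/
noncomputable def Rport (R : Fin m → ℕ → S → (∀ i, A i) → ℝ) (τ τ' : ∀ i : Fin m, ℕ → S → A i)
    (i : Fin m) : ℕ → S → (∀ i, A i) → ℝ :=
  fun h s a => (dfun τ h s a / m) * R i h s (tgtJ τ h s)
    + (1 - dfun τ h s a / m) * R i h s (tgtJ τ' h s)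

/-- Post-attack transition probabilities of the `d`-portion attack. -/
noncomputable def Pport (P : ℕ → S → (∀ i, A i) → S → ℝ) (τ τ' : ∀ i : Fin m, ℕ → S → A i) :
    ℕ → S → (∀ i, A i) → S → ℝ :=
  fun h s a s' => (dfun τ h s a / m) * P h s (tgtJ τ h s) s'
    + (1 - dfun τ h s a / m) * P h s (tgtJ τ' h s) s'

/-- `Δ^{†−}_{i,h}(s) = Q^{π†}_{i,h}(s, π†_h(s)) − Q^{π†}_{i,h}(s, π⁻_h(s))` (original game). -/
noncomputable def Δdag (P : ℕ → S → (∀ i, A i) → S → ℝ) (R : Fin m → ℕ → S → (∀ i, A i) → ℝ)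
    (τ τ' : ∀ i : Fin m, ℕ → S → A i) (H : ℕ) (i : Fin m) (h : ℕ) (s : S) : ℝ :=
  Qf P (R i) (jp (detP τ)) H h s (tgtJ τ h s) - Qf P (R i) (jp (detP τ)) H h s (tgtJ τ' h s)

/-- Post-attack mean rewards of the `η`-gap attack; `ΔR i` is the reward spread of agent `i`. -/
noncomputable def Rgap (R : Fin m → ℕ → S → (∀ i, A i) → ℝ) (τ : ∀ i : Fin m, ℕ → S → A i)
    (η : ℝ) (ΔR : Fin m → ℝ) (H : ℕ) (i : Fin m) : ℕ → S → (∀ i, A i) → ℝ :=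
  fun h s a =>
    if a = tgtJ τ h s then R i h s a
    else R i h s (tgtJ τ h s) - (η + ((H - h : ℕ) : ℝ) * ΔR i) * (if a i = τ i h s then 0 else 1)

/-- Post-attack mean rewards of the mixed attack. -/
noncomputable def Rmix (R : Fin m → ℕ → S → (∀ i, A i) → ℝ) (τ : ∀ i : Fin m, ℕ → S → A i)
    (i : Fin m) : ℕ → S → (∀ i, A i) → ℝ :=
  fun h s a => (if a i = τ i h s then (1 : ℝ) else 0) * R i h s (tgtJ τ h s)

/-- Post-attack transition probabilities of the mixed attack. -/
def Pmix (P : ℕ → S → (∀ i, A i) → S → ℝ) (τ : ∀ i : Fin m, ℕ → S → A i) :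
    ℕ → S → (∀ i, A i) → S → ℝ :=
  fun h s a s' => P h s (tgtJ τ h s) s'

/-- Probability of being in state `s'` after `n` steps, starting from `(h, s)` and following
the deterministic policy `τ` under the transitions `P`. -/
noncomputable def reach (P : ℕ → S → (∀ i, A i) → S → ℝ) (τ : ∀ i : Fin m, ℕ → S → A i) :
    ℕ → ℕ → S → S → ℝ
  | 0, _, s, s' => if s' = s then 1 else 0
  | n + 1, h, s, s' => ∑ t, P h s (tgtJ τ h s) t * reach P τ n (h + 1) t s'

/-- Expected sum of a state-dependent function along the Markov chain `Ps`. -/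
noncomputable def SSum (Ps : ℕ → S → S → ℝ) (f : ℕ → S → ℝ) : ℕ → ℕ → S → ℝ
  | 0, _, _ => 0
  | n + 1, h, s => f h s + ∑ s', Ps h s s' * SSum Ps f n (h + 1) s'

end MGAttack

namespace MGAttack

set_option linter.unusedSectionVars false

variable {S : Type} [Fintype S] [DecidableEq S]
variable {m : ℕ} {A : Fin m → Type} [∀ i, Fintype (A i)] [∀ i, DecidableEq (A i)]


lemma Rgap_eq (R : Fin m → ℕ → S → (∀ i, A i) → ℝ) (τ : ∀ i : Fin m, ℕ → S → A i)
    (η : ℝ) (ΔR : Fin m → ℝ) (H : ℕ) (i : Fin m) (h : ℕ) (s : S) (a : ∀ j, A j) :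
    Rgap R τ η ΔR H i h s a
      = R i h s (tgtJ τ h s)
        - (η + ((H - h : ℕ) : ℝ) * ΔR i) * (if a i = τ i h s then 0 else 1) := by
  unfold Rgap
  by_cases ha : a = tgtJ τ h s
  · have hai : a i = τ i h s := by rw [ha]; rfl
    rw [if_pos ha, if_pos hai, ha]
    ring
  · rw [if_neg ha]

lemma jp_prop {H : ℕ} {π : ∀ j : Fin m, ℕ → S → A j → ℝ} (hπ : IsPolicy H π) :
    ∀ g ∈ Finset.Icc 1 H, ∀ s : S, (∀ a, 0 ≤ jp π g s a) ∧ ∑ a, jp π g s a = 1 := by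
  intro g hg s
  constructor
  · intro a; exact Finset.prod_nonneg fun j _ => (hπ j g hg s).1 (a j)
  · unfold jp
    rw [← Fintype.piFinset_univ, ← Finset.prod_univ_sum]
    exact Finset.prod_eq_one fun j _ => (hπ j g hg s).2

lemma isPolicy_update {H : ℕ} {π : ∀ j : Fin m, ℕ → S → A j → ℝ} (hπ : IsPolicy H π)
    (τ : ∀ j : Fin m, ℕ → S → A j) (i : Fin m) :
    IsPolicy H (Function.update π i (detP τ i)) := by
  intro j g hg s
  by_cases hj : j = i
  · subst hj
    rw [Function.update_self]
    constructor
    · intro b; unfold detP; split <;> norm_num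
    · simp [detP]
  · rw [Function.update_of_ne hj]; exact hπ j g hg s

lemma jp_update_ne {π : ∀ j : Fin m, ℕ → S → A j → ℝ} {τ : ∀ j : Fin m, ℕ → S → A j}
    {i : Fin m} {g : ℕ} {s : S} {a : ∀ j, A j} (hne : a i ≠ τ i g s) :
    jp (Function.update π i (detP τ i)) g s a = 0 := by
  unfold jp
  apply Finset.prod_eq_zero (Finset.mem_univ i)
  rw [Function.update_self]
  simp [detP, hne]

lemma VA_le_of {H : ℕ} {P : ℕ → S → (∀ i, A i) → S → ℝ} (hP : IsKernel H P)
    {f : ℕ → S → (∀ i, A i) → ℝ} {πj : ℕ → S → (∀ i, A i) → ℝ}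
    (hπ : ∀ g ∈ Finset.Icc 1 H, ∀ s : S, (∀ a, 0 ≤ πj g s a) ∧ ∑ a, πj g s a = 1)
    {c : ℝ} (hf : ∀ g ∈ Finset.Icc 1 H, ∀ s a, πj g s a ≠ 0 → f g s a ≤ c) :
    ∀ n h s, 1 ≤ h → h + n ≤ H + 1 → VA P f πj n h s ≤ n * c := by
  intro n
  induction n with
  | zero => intro h s _ _; simp [VA]
  | succ n ih =>
    intro h s h1 hn
    have hhm : h ∈ Finset.Icc 1 H := by simp only [Finset.mem_Icc]; omega
    have hsum := (hπ h hhm s).2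
    have hnn := (hπ h hhm s).1
    show (∑ a, πj h s a * (f h s a + ∑ s', P h s a s' * VA P f πj n (h + 1) s')) ≤ _
    calc ∑ a, πj h s a * (f h s a + ∑ s', P h s a s' * VA P f πj n (h + 1) s')
        ≤ ∑ a, πj h s a * (c + n * c) := by
          apply Finset.sum_le_sum
          intro a _
          rcases eq_or_ne (πj h s a) 0 with h0 | h0
          · simp [h0]
          apply mul_le_mul_of_nonneg_left _ (hnn a)
          have hPk := hP h hhm s a
          apply add_le_add (hf h hhm s a h0)
          calc ∑ s', P h s a s' * VA P f πj n (h + 1) s'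
              ≤ ∑ s', P h s a s' * (n * c) := by
                apply Finset.sum_le_sum
                intro s' _
                exact mul_le_mul_of_nonneg_left (ih (h+1) s' (by omega) (by omega)) (hPk.1 s')
            _ = n * c := by rw [← Finset.sum_mul, hPk.2, one_mul]
      _ = (n + 1 : ℕ) * (c) := by
          rw [← Finset.sum_mul, hsum, one_mul]; push_cast; ring

lemma VA_ge_of {H : ℕ} {P : ℕ → S → (∀ i, A i) → S → ℝ} (hP : IsKernel H P)
    {f : ℕ → S → (∀ i, A i) → ℝ} {πj : ℕ → S → (∀ i, A i) → ℝ}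
    (hπ : ∀ g ∈ Finset.Icc 1 H, ∀ s : S, (∀ a, 0 ≤ πj g s a) ∧ ∑ a, πj g s a = 1)
    {c : ℝ} (hf : ∀ g ∈ Finset.Icc 1 H, ∀ s a, πj g s a ≠ 0 → c ≤ f g s a) :
    ∀ n h s, 1 ≤ h → h + n ≤ H + 1 → (n : ℝ) * c ≤ VA P f πj n h s := by
  intro n
  induction n with
  | zero => intro h s _ _; simp [VA]
  | succ n ih =>
    intro h s h1 hn
    have hhm : h ∈ Finset.Icc 1 H := by simp only [Finset.mem_Icc]; omega
    have hsum := (hπ h hhm s).2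
    have hnn := (hπ h hhm s).1
    show _ ≤ (∑ a, πj h s a * (f h s a + ∑ s', P h s a s' * VA P f πj n (h + 1) s'))
    calc ((n + 1 : ℕ) : ℝ) * c = ∑ a, πj h s a * (c + n * c) := by
          rw [← Finset.sum_mul, hsum, one_mul]; push_cast; ring
      _ ≤ ∑ a, πj h s a * (f h s a + ∑ s', P h s a s' * VA P f πj n (h + 1) s') := by
          apply Finset.sum_le_sum
          intro a _
          rcases eq_or_ne (πj h s a) 0 with h0 | h0
          · simp [h0]
          apply mul_le_mul_of_nonneg_left _ (hnn a)
          have hPk := hP h hhm s a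
          apply add_le_add (hf h hhm s a h0)
          calc (n : ℝ) * c = ∑ s', P h s a s' * (n * c) := by
                rw [← Finset.sum_mul, hPk.2, one_mul]
            _ ≤ ∑ s', P h s a s' * VA P f πj n (h + 1) s' := by
                apply Finset.sum_le_sum
                intro s' _
                exact mul_le_mul_of_nonneg_left (ih (h+1) s' (by omega) (by omega)) (hPk.1 s')

lemma VA_lin (P : ℕ → S → (∀ i, A i) → S → ℝ) (f₁ f₂ : ℕ → S → (∀ i, A i) → ℝ)
    (πj : ℕ → S → (∀ i, A i) → ℝ) (η : ℝ) :
    ∀ n h s, VA P (fun g t a => f₁ g t a + η * f₂ g t a) πj n h s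
      = VA P f₁ πj n h s + η * VA P f₂ πj n h s := by
  intro n
  induction n with
  | zero => intro h s; simp [VA]
  | succ n ih =>
    intro h s
    show (∑ a, πj h s a * (_ + ∑ s', P h s a s' * VA P _ πj n (h+1) s')) = _
    rw [show VA P f₁ πj (n+1) h s + η * VA P f₂ πj (n+1) h s
        = ∑ a, (πj h s a * (f₁ h s a + ∑ s', P h s a s' * VA P f₁ πj n (h + 1) s')
            + η * (πj h s a * (f₂ h s a + ∑ s', P h s a s' * VA P f₂ πj n (h + 1) s')))
        from by rw [Finset.sum_add_distrib, ← Finset.mul_sum]; rfl]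
    apply Finset.sum_congr rfl
    intro a _
    rw [show (∑ s', P h s a s' * VA P (fun g t a => f₁ g t a + η * f₂ g t a) πj n (h + 1) s')
        = (∑ s', P h s a s' * VA P f₁ πj n (h + 1) s')
          + η * ∑ s', P h s a s' * VA P f₂ πj n (h + 1) s' from by
      rw [Finset.mul_sum, ← Finset.sum_add_distrib]
      exact Finset.sum_congr rfl fun s' _ => by rw [ih]; ring]
    ring

lemma sum_jp_detP (π : ∀ j : Fin m, ℕ → S → A j → ℝ) (τ : ∀ j : Fin m, ℕ → S → A j)
    (i : Fin m) (h : ℕ) (s : S) (hsum : ∑ b, π i h s b = 1) (G : (∀ j, A j) → ℝ) :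
    ∑ a, jp (Function.update π i (detP τ i)) h s a * G a
      = ∑ a, jp π h s a * G (Function.update a i (τ i h s)) := by
  classical
  set c := τ i h s with hc
  set e := Equiv.piSplitAt i A with he
  have hsymm_i : ∀ (b : A i) (r : ∀ j : {j : Fin m // j ≠ i}, A j), e.symm (b, r) i = b := by
    intro b r; simp [he, Equiv.piSplitAt_symm_apply]
  have hsymm_ne : ∀ (b : A i) (r : ∀ j : {j : Fin m // j ≠ i}, A j) (j : Fin m) (hj : j ≠ i),
      e.symm (b, r) j = r ⟨j, hj⟩ := by
    intro b r j hj; simp [he, Equiv.piSplitAt_symm_apply, hj]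
  have hupd : ∀ (b : A i) (r : ∀ j : {j : Fin m // j ≠ i}, A j),
      Function.update (e.symm (b, r)) i c = e.symm (c, r) := by
    intro b r; funext j
    by_cases hj : j = i
    · subst hj; rw [Function.update_self, hsymm_i]
    · rw [Function.update_of_ne hj, hsymm_ne _ _ _ hj, hsymm_ne _ _ _ hj]
  have hprod : ∀ (σ : ∀ j : Fin m, ℕ → S → A j → ℝ) (a : ∀ j, A j),
      jp σ h s a = σ i h s (a i) * ∏ j : {j : Fin m // j ≠ i}, σ j h s (a j) := by
    intro σ a
    unfold jp
    rw [Fintype.prod_eq_mul_prod_compl i]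
    congr 1
    exact Finset.prod_subtype ({i}ᶜ) (fun j => by simp) (fun j => σ j h s (a j))
  have key1 : ∀ (b : A i) (r : ∀ j : {j : Fin m // j ≠ i}, A j),
      jp (Function.update π i (detP τ i)) h s (e.symm (b, r))
        = (if b = c then (1:ℝ) else 0) * ∏ j : {j : Fin m // j ≠ i}, π j h s (r j) := by
    intro b r
    rw [hprod]
    congr 1
    · rw [hsymm_i, Function.update_self]; rfl
    · apply Finset.prod_congr rfl
      intro j _
      rw [hsymm_ne _ _ _ j.2, Function.update_of_ne j.2]
  have key2 : ∀ (b : A i) (r : ∀ j : {j : Fin m // j ≠ i}, A j),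
      jp π h s (e.symm (b, r)) = π i h s b * ∏ j : {j : Fin m // j ≠ i}, π j h s (r j) := by
    intro b r
    rw [hprod]
    congr 1
    · rw [hsymm_i]
    · apply Finset.prod_congr rfl
      intro j _
      rw [hsymm_ne _ _ _ j.2]
  rw [← Equiv.sum_comp e.symm
      (fun a => jp (Function.update π i (detP τ i)) h s a * G a),
    ← Equiv.sum_comp e.symm (fun a => jp π h s a * G (Function.update a i c))]
  rw [Fintype.sum_prod_type, Fintype.sum_prod_type]
  have LHS' : (∑ b : A i, ∑ r, jp (Function.update π i (detP τ i)) h s (e.symm (b, r))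
        * G (e.symm (b, r)))
      = ∑ r, (∏ j : {j : Fin m // j ≠ i}, π j h s (r j)) * G (e.symm (c, r)) := by
    have : ∀ b : A i, (∑ r, jp (Function.update π i (detP τ i)) h s (e.symm (b, r))
          * G (e.symm (b, r)))
        = if b = c then (∑ r, (∏ j : {j : Fin m // j ≠ i}, π j h s (r j)) * G (e.symm (c, r)))
          else 0 := by
      intro b
      by_cases hb : b = c
      · subst hb
        simp only [if_pos rfl]
        exact Finset.sum_congr rfl fun r _ => by rw [key1]; simp
      · simp only [if_neg hb]
        apply Finset.sum_eq_zero
        intro r _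
        rw [key1, if_neg hb, zero_mul, zero_mul]
    rw [Finset.sum_congr rfl fun b _ => this b, Finset.sum_ite_eq']
    simp
  have RHS' : (∑ b : A i, ∑ r, jp π h s (e.symm (b, r))
        * G (Function.update (e.symm (b, r)) i c))
      = ∑ r, (∏ j : {j : Fin m // j ≠ i}, π j h s (r j)) * G (e.symm (c, r)) := by
    have : ∀ b : A i, (∑ r, jp π h s (e.symm (b, r)) * G (Function.update (e.symm (b, r)) i c))
        = π i h s b * ∑ r, (∏ j : {j : Fin m // j ≠ i}, π j h s (r j)) * G (e.symm (c, r)) := by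
      intro b
      rw [Finset.mul_sum]
      apply Finset.sum_congr rfl
      intro r _
      rw [key2, hupd]
      ring
    rw [Finset.sum_congr rfl fun b _ => this b, ← Finset.sum_mul, hsum, one_mul]
  rw [LHS', RHS']



set_option maxHeartbeats 1000000 in
lemma key_ind {S : Type} [Fintype S] [DecidableEq S]
    {m : ℕ} {A : Fin m → Type} [∀ i, Fintype (A i)] [∀ i, DecidableEq (A i)]
    (H : ℕ) (P : ℕ → S → (∀ i, A i) → S → ℝ) (hP : IsKernel H P)
    (R : Fin m → ℕ → S → (∀ i, A i) → ℝ)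
    (τ : ∀ j : Fin m, ℕ → S → A j) (η : ℝ)
    (Rmax Rmin : Fin m → ℝ) (i : Fin m)
    (hΔ : 0 ≤ Rmax i - Rmin i)
    (hub : ∀ g ∈ Finset.Icc 1 H, ∀ s : S, R i g s (tgtJ τ g s) ≤ Rmax i)
    (hlb : ∀ g ∈ Finset.Icc 1 H, ∀ s : S, Rmin i ≤ R i g s (tgtJ τ g s))
    (π : ∀ j : Fin m, ℕ → S → A j → ℝ) (hπ : IsPolicy H π) :
    ∀ n h s, 1 ≤ h → h + n = H + 1 →
      η * VA P (fun g t a => if a i = τ i g t then (0:ℝ) else 1) (jp π) n h s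
        ≤ VA P (Rgap R τ η (fun j => Rmax j - Rmin j) H i)
              (jp (Function.update π i (detP τ i))) n h s
          - VA P (Rgap R τ η (fun j => Rmax j - Rmin j) H i) (jp π) n h s := by
  set ΔR : Fin m → ℝ := fun j => Rmax j - Rmin j with hΔR
  set Rt : ℕ → S → (∀ j, A j) → ℝ := Rgap R τ η ΔR H i with hRt
  set ind : ℕ → S → (∀ j, A j) → ℝ := fun g t a => if a i = τ i g t then (0:ℝ) else 1
    with hind
  set π'' : ∀ j : Fin m, ℕ → S → A j → ℝ := Function.update π i (detP τ i) with hπ''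
  have hpol'' : IsPolicy H π'' := isPolicy_update hπ τ i
  have hjp := jp_prop hπ
  have hjp'' := jp_prop hpol''
  -- pointwise reward bounds
  have hRt_ub : ∀ g ∈ Finset.Icc 1 H, ∀ (t : S) (a : ∀ j, A j),
      Rt g t a + η * ind g t a ≤ Rmax i := by
    intro g hg t a
    rw [hRt, Rgap_eq, hind]
    by_cases hai : a i = τ i g t
    · simp only [if_pos hai]
      calc R i g t (tgtJ τ g t) - (η + ((H - g : ℕ) : ℝ) * ΔR i) * 0 + η * 0
          = R i g t (tgtJ τ g t) := by ring
        _ ≤ Rmax i := hub g hg t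
    · simp only [if_neg hai]
      have h1 : (0:ℝ) ≤ ((H - g : ℕ) : ℝ) * ΔR i :=
        mul_nonneg (Nat.cast_nonneg _) hΔ
      calc R i g t (tgtJ τ g t) - (η + ((H - g : ℕ) : ℝ) * ΔR i) * 1 + η * 1
          = R i g t (tgtJ τ g t) - ((H - g : ℕ) : ℝ) * ΔR i := by ring
        _ ≤ R i g t (tgtJ τ g t) := by linarith
        _ ≤ Rmax i := hub g hg t
  have hRt_lb : ∀ g ∈ Finset.Icc 1 H, ∀ (t : S) (a : ∀ j, A j),
      jp π'' g t a ≠ 0 → Rmin i ≤ Rt g t a := by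
    intro g hg t a hne
    have hai : a i = τ i g t := by
      by_contra hco
      exact hne (jp_update_ne hco)
    rw [hRt, Rgap_eq, if_pos hai, mul_zero, sub_zero]
    exact hlb g hg t
  intro n
  induction n with
  | zero => intro h s _ _; simp [VA]
  | succ n ih =>
    intro h s h1 hn
    have hhm : h ∈ Finset.Icc 1 H := by simp only [Finset.mem_Icc]; omega
    set c := τ i h s with hc
    have hrw : VA P Rt (jp π'') (n+1) h s
        = ∑ a, jp π h s a
            * (Rt h s (Function.update a i c)
              + ∑ s', P h s (Function.update a i c) s' * VA P Rt (jp π'') n (h+1) s') := by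
      show (∑ a, jp π'' h s a * (Rt h s a + ∑ s', P h s a s' * VA P Rt (jp π'') n (h+1) s'))
        = _
      exact sum_jp_detP π τ i h s (hπ i h hhm s).2
        (fun a => Rt h s a + ∑ s', P h s a s' * VA P Rt (jp π'') n (h+1) s')
    rw [hrw]
    show η * (∑ a, jp π h s a * (ind h s a + ∑ s', P h s a s' * VA P ind (jp π) n (h+1) s'))
      ≤ _ - (∑ a, jp π h s a * (Rt h s a + ∑ s', P h s a s' * VA P Rt (jp π) n (h+1) s'))
    rw [Finset.mul_sum, ← Finset.sum_sub_distrib]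
    apply Finset.sum_le_sum
    intro a _
    rw [← mul_sub, ← mul_assoc, mul_comm η (jp π h s a), mul_assoc]
    rcases eq_or_ne (jp π h s a) 0 with h0 | h0
    · rw [h0]; simp
    apply mul_le_mul_of_nonneg_left _ ((hjp h hhm s).1 a)
    have hPk := hP h hhm s a
    by_cases hai : a i = c
    · -- agent i already plays the target action at step h
      have hupd : Function.update a i c = a := by
        rw [← hai]; exact Function.update_eq_self i a
      rw [hupd]
      have hind0 : ind h s a = 0 := by rw [hind]; simp only; rw [if_pos hai]
      rw [hind0, zero_add]
      have hdiff : Rt h s a + ∑ s', P h s a s' * VA P Rt (jp π'') n (h + 1) s'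
          - (Rt h s a + ∑ s', P h s a s' * VA P Rt (jp π) n (h + 1) s')
          = ∑ s', P h s a s'
              * (VA P Rt (jp π'') n (h + 1) s' - VA P Rt (jp π) n (h + 1) s') := by
        rw [Finset.sum_congr rfl fun s' _ =>
          mul_sub (P h s a s') (VA P Rt (jp π'') n (h + 1) s') (VA P Rt (jp π) n (h + 1) s'),
          Finset.sum_sub_distrib]
        ring
      rw [hdiff]
      calc η * ∑ s', P h s a s' * VA P ind (jp π) n (h + 1) s'
          = ∑ s', P h s a s' * (η * VA P ind (jp π) n (h + 1) s') := by
            rw [Finset.mul_sum]; exact Finset.sum_congr rfl fun s' _ => by ring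
        _ ≤ ∑ s', P h s a s'
              * (VA P Rt (jp π'') n (h + 1) s' - VA P Rt (jp π) n (h + 1) s') :=
            Finset.sum_le_sum fun s' _ => mul_le_mul_of_nonneg_left
              (ih (h+1) s' (by omega) (by omega)) (hPk.1 s')
    · -- agent i deviates at step h
      set abar := Function.update a i c with habar
      have hPk' := hP h hhm s abar
      have hind1 : ind h s a = 1 := by rw [hind]; simp only; rw [if_neg hai]
      have hRta : Rt h s a = R i h s (tgtJ τ h s) - (η + ((H - h : ℕ) : ℝ) * ΔR i) := by
        rw [hRt, Rgap_eq, if_neg hai, mul_one]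
      have hRtabar : Rt h s abar = R i h s (tgtJ τ h s) := by
        rw [hRt, Rgap_eq, habar]
        rw [if_pos (Function.update_self i c a), mul_zero, sub_zero]
      rw [hind1, hRta, hRtabar]
      -- Bound A : continuation value under π'' is at least n * Rmin i
      have hA : (n : ℝ) * Rmin i ≤ ∑ s', P h s abar s' * VA P Rt (jp π'') n (h+1) s' := by
        calc (n : ℝ) * Rmin i = ∑ s', P h s abar s' * ((n : ℝ) * Rmin i) := by
              rw [← Finset.sum_mul, hPk'.2, one_mul]
          _ ≤ _ := Finset.sum_le_sum fun s' _ => mul_le_mul_of_nonneg_left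
              (VA_ge_of hP hjp'' hRt_lb n (h+1) s' (by omega) (by omega)) (hPk'.1 s')
      -- Bound B : continuation value under π plus η·deviations is at most n * Rmax i
      have hB : (∑ s', P h s a s' * VA P Rt (jp π) n (h+1) s')
            + η * ∑ s', P h s a s' * VA P ind (jp π) n (h+1) s' ≤ (n : ℝ) * Rmax i := by
        have hcomb : ∀ s' : S,
            VA P Rt (jp π) n (h+1) s' + η * VA P ind (jp π) n (h+1) s'
              = VA P (fun g t a => Rt g t a + η * ind g t a) (jp π) n (h+1) s' :=
          fun s' => (VA_lin P Rt ind (jp π) η n (h+1) s').symm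
        calc (∑ s', P h s a s' * VA P Rt (jp π) n (h+1) s')
              + η * ∑ s', P h s a s' * VA P ind (jp π) n (h+1) s'
            = ∑ s', P h s a s'
                * (VA P Rt (jp π) n (h+1) s' + η * VA P ind (jp π) n (h+1) s') := by
              rw [Finset.mul_sum, ← Finset.sum_add_distrib]
              exact Finset.sum_congr rfl fun s' _ => by ring
          _ ≤ ∑ s', P h s a s' * ((n : ℝ) * Rmax i) := by
              apply Finset.sum_le_sum
              intro s' _
              apply mul_le_mul_of_nonneg_left _ (hPk.1 s')
              rw [hcomb s']
              exact VA_le_of hP hjp (fun g hg t b _ => hRt_ub g hg t b) n (h+1) s'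
                (by omega) (by omega)
          _ = (n : ℝ) * Rmax i := by rw [← Finset.sum_mul, hPk.2, one_mul]
      have hd : ((H - h : ℕ) : ℝ) = (n : ℝ) := by
        have : H - h = n := by omega
        rw [this]
      have hΔRi : ΔR i = Rmax i - Rmin i := rfl
      rw [hd]
      rw [hΔRi] at *
      linarith


/-- Under Condition 2 and the `η`-gap attack, for every agent `i`, Markov product policy
`π` and initial state `s₁`, the post-attack value gain of unilaterally switching agent `i`
to `π†_i` is at least `η` times the expected number of steps on which agent `i` deviates
from the target action (and this expectation is nonnegative). -/
theorem stmt10 {S : Type} [Fintype S] [DecidableEq S]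
    {m : ℕ} {A : Fin m → Type} [∀ i, Fintype (A i)] [∀ i, DecidableEq (A i)]
    (H : ℕ) (hH : 1 ≤ H) (hm : 1 ≤ m)
    (P : ℕ → S → (∀ i, A i) → S → ℝ) (hP : IsKernel H P)
    (R : Fin m → ℕ → S → (∀ i, A i) → ℝ) (hR : IsReward H R)
    (τ : ∀ i : Fin m, ℕ → S → A i) (η : ℝ) (hη : 0 < η)
    (Rmax Rmin : Fin m → ℝ)
    (hmax : ∀ i : Fin m, IsGreatest
      {x : ℝ | ∃ h ∈ Finset.Icc 1 H, ∃ s : S, ∃ a : ∀ j, A j, x = R i h s a} (Rmax i))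
    (hmin : ∀ i : Fin m, IsLeast
      {x : ℝ | ∃ h ∈ Finset.Icc 1 H, ∃ s : S, ∃ a : ∀ j, A j, x = R i h s a} (Rmin i))
    -- Condition 2
    (hcond2 : ∀ i : Fin m, ∀ h ∈ Finset.Icc 1 H, ∀ s : S,
      ((H - h : ℕ) : ℝ) * (Rmax i - Rmin i) ≤ R i h s (tgtJ τ h s) - η)
    (π : ∀ j : Fin m, ℕ → S → A j → ℝ) (hπ : IsPolicy H π) (i : Fin m) (s₁ : S) :
    η * VA P (fun h s a => if a i = τ i h s then (0 : ℝ) else 1) (jp π) H 1 s₁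
        ≤ Vf P (Rgap R τ η (fun j => Rmax j - Rmin j) H i)
            (jp (Function.update π i (detP τ i))) H 1 s₁
          - Vf P (Rgap R τ η (fun j => Rmax j - Rmin j) H i) (jp π) H 1 s₁
    ∧ 0 ≤ VA P (fun h s a => if a i = τ i h s then (0 : ℝ) else 1) (jp π) H 1 s₁ := by
  classical
  have hub : ∀ g ∈ Finset.Icc 1 H, ∀ s : S, R i g s (tgtJ τ g s) ≤ Rmax i :=
    fun g hg s => (hmax i).2 ⟨g, hg, s, tgtJ τ g s, rfl⟩
  have hlb : ∀ g ∈ Finset.Icc 1 H, ∀ s : S, Rmin i ≤ R i g s (tgtJ τ g s) :=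
    fun g hg s => (hmin i).2 ⟨g, hg, s, tgtJ τ g s, rfl⟩
  have hΔ : 0 ≤ Rmax i - Rmin i := by
    have := (hmin i).2 (hmax i).1
    linarith
  constructor
  · have hkey := key_ind H P hP R τ η Rmax Rmin i hΔ hub hlb π hπ H 1 s₁ le_rfl
      (by omega)
    simpa [Vf, Nat.add_sub_cancel] using hkey
  · have h0 := VA_ge_of hP (jp_prop hπ)
      (f := fun g t a => if a i = τ i g t then (0:ℝ) else 1) (c := 0)
      (fun g hg t a _ => by split <;> norm_num) H 1 s₁ le_rfl (by omega)
    simpa using h0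

end MGAttack
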